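/- Consider a network of n queues with periodic exogenous arrival rates e(i)(t) and service rates c(i)(t) of period T, routing matrix R with spectral radius less than 1, and link travel times τ(i,j) > 0. If a T-periodic solution of the network dynamics exists, with ē, c̄, ȳ denoting the per-period averages of arrivals, service rates, and unused service rates, then c̄ = (I − Rᵀ)⁻¹ ē + ȳ, and in particular c̄ ≥ (I − Rᵀ)⁻¹ ē componentwise. -/

import Mathlib

open Set Filter MeasureTheory Matrix

private lemma aux_isUnit_one_sub {n : ℕ} (R : Matrix (Fin n) (Fin n) ℝ)
    (h : Tendsto (fun k : ℕ => R ^ k) atTop (nhds 0)) : IsUnit (1 - R) := by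
  letI : NormedRing (Matrix (Fin n) (Fin n) ℝ) := Matrix.linftyOpNormedRing
  letI : NormedAlgebra ℝ (Matrix (Fin n) (Fin n) ℝ) := Matrix.linftyOpNormedAlgebra
  haveI : CompleteSpace (Matrix (Fin n) (Fin n) ℝ) := FiniteDimensional.complete ℝ _
  obtain ⟨N, hN⟩ := (Metric.tendsto_atTop.mp h) 1 one_pos
  have hnorm : ‖R ^ N‖ < 1 := by simpa [dist_eq_norm] using hN N le_rfl
  have hu : IsUnit (1 - R ^ N) := isUnit_one_sub_of_norm_lt_one hnorm
  set S : Matrix (Fin n) (Fin n) ℝ := ∑ i ∈ Finset.range N, R ^ i with hS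
  have h1 : (1 - R) * S = 1 - R ^ N := by
    have h := mul_geom_sum R N
    calc (1 - R) * S = -((R - 1) * S) := by rw [← neg_sub R 1, neg_mul]
      _ = -(R ^ N - 1) := by rw [h]
      _ = 1 - R ^ N := neg_sub _ _
  have h3 : S * (1 - R) = 1 - R ^ N := by
    have h := geom_sum_mul R N
    calc S * (1 - R) = -(S * (R - 1)) := by rw [← neg_sub R 1, mul_neg]
      _ = -(R ^ N - 1) := by rw [h]
      _ = 1 - R ^ N := neg_sub _ _
  have hc : Commute (1 - R) S := by rw [Commute, SemiconjBy, h1, h3]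
  rw [← h1] at hu
  exact (hc.isUnit_mul_iff.mp hu).1

/-- Flow-balance necessary condition for a `T`-periodic solution of the
network queueing dynamics: the per-period average service vector satisfies
`c̄ = (I − Rᵀ)⁻¹ ē + ȳ`, and in particular `c̄ ≥ (I − Rᵀ)⁻¹ ē`. -/
theorem periodic_solution_flow_balance
    (n : ℕ) (R : Matrix (Fin n) (Fin n) ℝ)
    (hRnn : ∀ i j, 0 ≤ R i j)
    (hRpow : Tendsto (fun k : ℕ => R ^ k) atTop (nhds 0))
    (τ : Fin n → Fin n → ℝ) (hτ : ∀ i j, 0 < τ i j)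
    (T : ℝ) (hT : 0 < T)
    (e c x b y : Fin n → ℝ → ℝ)
    -- data regularity and periodicity
    (heint : ∀ i (s t : ℝ), IntervalIntegrable (e i) volume s t)
    (hcint : ∀ i (s t : ℝ), IntervalIntegrable (c i) volume s t)
    (hbint : ∀ i (s t : ℝ), IntervalIntegrable (b i) volume s t)
    (heper : ∀ i t, e i (t + T) = e i t)
    (hcper : ∀ i t, c i (t + T) = c i t)
    -- network equations
    (hb : ∀ i t, b i t = c i t - y i t)
    (hynn : ∀ i t, 0 ≤ y i t)
    (hxnn : ∀ i t, 0 ≤ x i t)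
    (hcomp : ∀ i t, x i t * y i t = 0)
    (hdyn : ∀ i t, HasDerivAt (x i)
      (e i t - b i t + ∑ j, b j (t - τ j i) * R j i) t)
    -- `T`-periodicity of the solution
    (hxper : ∀ i t, x i (t + T) = x i t)
    (hbper : ∀ i t, b i (t + T) = b i t) :
    (∀ i, (1 / T) * ∫ t in (0:ℝ)..T, c i t
        = ((1 - R.transpose)⁻¹ *ᵥ (fun j => (1 / T) * ∫ t in (0:ℝ)..T, e j t)) i
          + (1 / T) * ∫ t in (0:ℝ)..T, y i t) ∧
    (∀ i, ((1 - R.transpose)⁻¹ *ᵥ (fun j => (1 / T) * ∫ t in (0:ℝ)..T, e j t)) i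
        ≤ (1 / T) * ∫ t in (0:ℝ)..T, c i t) := by
  -- integrability of y and of shifted b
  have hyeq : ∀ i, y i = fun t => c i t - b i t := by
    intro i; funext t; have := hb i t; linarith
  have hyint : ∀ i (s t : ℝ), IntervalIntegrable (y i) volume s t := by
    intro i s t; rw [hyeq i]; exact (hcint i s t).sub (hbint i s t)
  have hbshift : ∀ j i, IntervalIntegrable (fun t => b j (t - τ j i)) volume 0 T := by
    intro j i
    have h := (hbint j (0 - τ j i) (T - τ j i)).comp_sub_right (τ j i)
    simpa using h
  -- the flow balance identity from FTC and periodicity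
  have key : ∀ i, (∫ t in (0:ℝ)..T, b i t)
      = (∫ t in (0:ℝ)..T, e i t) + ∑ j, (∫ t in (0:ℝ)..T, b j t) * R j i := by
    intro i
    have hsumint : IntervalIntegrable
        (fun t => ∑ j, b j (t - τ j i) * R j i) volume 0 T := by
      have h := IntervalIntegrable.sum (f := fun j t => b j (t - τ j i) * R j i)
        Finset.univ (fun j _ => (hbshift j i).mul_const _)
      simpa [Finset.sum_fn] using h
    have hint : IntervalIntegrable
        (fun t => e i t - b i t + ∑ j, b j (t - τ j i) * R j i) volume 0 T :=
      ((heint i 0 T).sub (hbint i 0 T)).add hsumint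
    have hftc : (∫ t in (0:ℝ)..T, (e i t - b i t + ∑ j, b j (t - τ j i) * R j i))
        = x i T - x i 0 :=
      intervalIntegral.integral_eq_sub_of_hasDerivAt (fun t _ => hdyn i t) hint
    have hx0 : x i T = x i 0 := by simpa using hxper i 0
    have hsplit : (∫ t in (0:ℝ)..T, (e i t - b i t + ∑ j, b j (t - τ j i) * R j i))
        = (∫ t in (0:ℝ)..T, e i t) - (∫ t in (0:ℝ)..T, b i t)
          + ∑ j, (∫ t in (0:ℝ)..T, b j (t - τ j i)) * R j i := by
      rw [intervalIntegral.integral_add ((heint i 0 T).sub (hbint i 0 T)) hsumint,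
        intervalIntegral.integral_sub (heint i 0 T) (hbint i 0 T),
        intervalIntegral.integral_finset_sum (f := fun j t => b j (t - τ j i) * R j i)
          (fun j _ => (hbshift j i).mul_const _)]
      congr 1
      exact Finset.sum_congr rfl fun j _ => intervalIntegral.integral_mul_const _ _
    have hshift : ∀ j, (∫ t in (0:ℝ)..T, b j (t - τ j i)) = ∫ t in (0:ℝ)..T, b j t := by
      intro j
      rw [intervalIntegral.integral_comp_sub_right]
      have hper : Function.Periodic (b j) T := hbper j
      have h := hper.intervalIntegral_add_eq (-(τ j i)) 0
      simpa [zero_sub, neg_add_eq_sub] using h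
    have hsum_eq : ∑ j, (∫ t in (0:ℝ)..T, b j (t - τ j i)) * R j i
        = ∑ j, (∫ t in (0:ℝ)..T, b j t) * R j i :=
      Finset.sum_congr rfl fun j _ => by rw [hshift j]
    have hzero : (∫ t in (0:ℝ)..T, e i t) - (∫ t in (0:ℝ)..T, b i t)
        + ∑ j, (∫ t in (0:ℝ)..T, b j (t - τ j i)) * R j i = 0 := by
      rw [← hsplit, hftc, hx0, sub_self]
    rw [hsum_eq] at hzero
    linarith
  -- invertibility
  have hunit : IsUnit (1 - R.transpose) := by
    have h1 : IsUnit (1 - R) := aux_isUnit_one_sub R hRpow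
    have h2 : (1 - R.transpose) = (1 - R).transpose := by
      rw [Matrix.transpose_sub, Matrix.transpose_one]
    rw [h2, Matrix.isUnit_iff_isUnit_det, Matrix.det_transpose,
      ← Matrix.isUnit_iff_isUnit_det]
    exact h1
  have hdet : IsUnit (1 - R.transpose).det := (Matrix.isUnit_iff_isUnit_det _).mp hunit
  -- vector form
  set Ev : Fin n → ℝ := fun j => (1 / T) * ∫ t in (0:ℝ)..T, e j t with hEv
  set Bv : Fin n → ℝ := fun j => (1 / T) * ∫ t in (0:ℝ)..T, b j t with hBv
  have hmat : (1 - R.transpose) *ᵥ Bv = Ev := by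
    rw [Matrix.sub_mulVec, Matrix.one_mulVec]
    funext i
    have hk := key i
    simp only [Pi.sub_apply, Matrix.mulVec, dotProduct, Matrix.transpose_apply, hBv, hEv]
    have h1 : ∑ j, R j i * (1 / T * ∫ t in (0:ℝ)..T, b j t)
        = 1 / T * ∑ j, (∫ t in (0:ℝ)..T, b j t) * R j i := by
      rw [Finset.mul_sum]; exact Finset.sum_congr rfl fun j _ => by ring
    rw [h1, ← mul_sub, hk]
    ring
  have hBvEq : Bv = (1 - R.transpose)⁻¹ *ᵥ Ev := by
    rw [← hmat, Matrix.mulVec_mulVec, Matrix.nonsing_inv_mul _ hdet, Matrix.one_mulVec]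
  -- c̄ = b̄ + ȳ
  have hcsum : ∀ i, (1 / T) * (∫ t in (0:ℝ)..T, c i t)
      = Bv i + (1 / T) * ∫ t in (0:ℝ)..T, y i t := by
    intro i
    have hceq : ∀ t, c i t = b i t + y i t := fun t => by have := hb i t; linarith
    have : (∫ t in (0:ℝ)..T, c i t)
        = (∫ t in (0:ℝ)..T, b i t) + ∫ t in (0:ℝ)..T, y i t := by
      rw [← intervalIntegral.integral_add (hbint i 0 T) (hyint i 0 T)]
      exact intervalIntegral.integral_congr fun t _ => hceq t
    rw [this, hBv]; ring
  have hpart1 : ∀ i, (1 / T) * ∫ t in (0:ℝ)..T, c i t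
      = ((1 - R.transpose)⁻¹ *ᵥ Ev) i + (1 / T) * ∫ t in (0:ℝ)..T, y i t := by
    intro i
    rw [hcsum i, ← hBvEq]
  refine ⟨hpart1, fun i => ?_⟩
  have hy : 0 ≤ (1 / T) * ∫ t in (0:ℝ)..T, y i t := by
    apply mul_nonneg (by positivity)
    exact intervalIntegral.integral_nonneg hT.le fun u _ => hynn i u
  have := hpart1 i
  linarith
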